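/- In the BCK-algebra X'_n (n ≥ 5), for all elements a, b with b ≤ a in the BCK-order, the sequence defined by z_0 = a, z_1 = b, and z_k = z_{k-2}·(z_{k-2}·z_{k-1}) for k ≥ 2 satisfies z_{n-2} = z_{n-1} (and hence z_k = z_{n-2} for all k ≥ n−2). -/
import Mathlib

/-- The operation of the linearly ordered BCK-algebra `X_n` written on natural
numbers: `x*y = 0` if `x ≤ y`, `x*0 = x`, `x*y = 1` if `x = y+1`, and
`x*y = x−y−1` if `x > y+1` and `y ≥ 1`. -/
def natStar (x y : ℕ) : ℕ :=
  if x ≤ y then 0 else if y = 0 then x else if x = y + 1 then 1 else x - y - 1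

/-- The operation of `X'_n = {0, 1, …, n}` written on natural numbers:
`x·y = x*y` for `x, y ≤ n−1`; `n·0 = n`; `n·y = n−y−1` for `1 ≤ y ≤ n−2`;
`n·(n−1) = 1`; `x·n = 0` for every `x ≠ n−1` (in particular `n·n = 0`);
and `(n−1)·n = 1`. -/
def primeVal (n x y : ℕ) : ℕ :=
  if y = n then (if x = n - 1 then 1 else 0)
  else if x = n then (if y = 0 then n else if y = n - 1 then 1 else n - y - 1)
  else natStar x y

theorem natStar_le (x y : ℕ) : natStar x y ≤ x := by
  unfold natStar; split_ifs <;> omega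

theorem primeVal_lt {n x y : ℕ} (hn : 1 ≤ n) (hx : x < n + 1) (hy : y < n + 1) :
    primeVal n x y < n + 1 := by
  have h := natStar_le x y
  unfold primeVal; split_ifs <;> omega

/-- The BCK-algebra operation of `X'_n = {0, 1, …, n}` (for `n ≥ 5`),
as an operation on `Fin (n+1)`. -/
def primeOp {n : ℕ} (hn : 5 ≤ n) (x y : Fin (n + 1)) : Fin (n + 1) :=
  ⟨primeVal n x y, primeVal_lt (by omega) x.isLt y.isLt⟩

/-- The sequence `z_0 = a`, `z_1 = b`, `z_k = z_{k-2}·(z_{k-2}·z_{k-1})`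
for `k ≥ 2`. -/
def zseq {X : Type*} (op : X → X → X) (a b : X) : ℕ → X
  | 0 => a
  | 1 => b
  | k + 2 => op (zseq op a b k) (op (zseq op a b k) (zseq op a b (k + 1)))

set_option maxHeartbeats 1000000 in
theorem keyA (n x y : ℕ) (hn : 5 ≤ n) (hx : x ≤ n) (hy : y ≤ n)
    (h : primeVal n y x = 0) (hne : ¬(x = y + 1 ∧ 2 ≤ y ∧ x < n)) :
    primeVal n x (primeVal n x y) = y := by
  obtain ⟨c, hc⟩ : ∃ c, primeVal n x y = c := ⟨_, rfl⟩
  rw [hc]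
  unfold primeVal natStar at h hc ⊢
  split_ifs at h hc ⊢ <;> first | contradiction | omega

theorem stepB (n x : ℕ) (hn : 5 ≤ n) (hx : 3 ≤ x) (hxn : x < n) :
    primeVal n x (primeVal n x (x - 1)) = x - 2 := by
  have h1 : primeVal n x (x - 1) = 1 := by
    unfold primeVal natStar; split_ifs <;> first | contradiction | omega
  rw [h1]; unfold primeVal natStar; split_ifs <;> first | contradiction | omega

theorem twoone (n : ℕ) (hn : 5 ≤ n) : primeVal n 2 (primeVal n 2 1) = 1 := by
  have h1 : primeVal n 2 1 = 1 := by
    unfold primeVal natStar; split_ifs <;> first | contradiction | omega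
  rw [h1, h1]

theorem fixpt (n x : ℕ) (hn : 5 ≤ n) (hx : x ≤ n) :
    primeVal n x (primeVal n x x) = x := by
  have h1 : primeVal n x x = 0 := by
    unfold primeVal natStar; split_ifs <;> first | contradiction | omega
  rw [h1]; unfold primeVal natStar; split_ifs <;> first | contradiction | omega

theorem zseq_const {X : Type*} (op : X → X → X) (a b : X)
    (hfix : ∀ x : X, op x (op x x) = x) (m : ℕ)
    (hm : zseq op a b (m + 1) = zseq op a b m) :
    ∀ k, zseq op a b (m + k) = zseq op a b m := by
  have H : ∀ k, zseq op a b (m + k) = zseq op a b m ∧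
      zseq op a b (m + k + 1) = zseq op a b m := by
    intro k
    induction k with
    | zero => exact ⟨rfl, hm⟩
    | succ k ih =>
      refine ⟨ih.2, ?_⟩
      have e : m + (k + 1) + 1 = m + k + 2 := by ring
      rw [e, zseq, ih.1, show m + k + 1 = m + k + 1 from rfl, ih.2, hfix]
  exact fun k => (H k).1

theorem primeOp_fix {n : ℕ} (hn : 5 ≤ n) (x : Fin (n + 1)) :
    primeOp hn x (primeOp hn x x) = x := by
  apply Fin.ext
  exact fixpt n x.val hn (by omega)

/-- In the BCK-algebra `X'_n` (`n ≥ 5`), for all elements `a, b` with `b ≤ a`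
in the BCK-order, the sequence `z_0 = a`, `z_1 = b`,
`z_k = z_{k-2}·(z_{k-2}·z_{k-1})` satisfies `z_{n-2} = z_{n-1}`
(and hence `z_k = z_{n-2}` for all `k ≥ n−2`). -/
theorem primeOp_seq_stabilizes (n : ℕ) (hn : 5 ≤ n) (a b : Fin (n + 1))
    (h : primeOp hn b a = 0) :
    zseq (primeOp hn) a b (n - 2) = zseq (primeOp hn) a b (n - 1) ∧
    ∀ k : ℕ, n - 2 ≤ k → zseq (primeOp hn) a b k = zseq (primeOp hn) a b (n - 2) := by
  set z := zseq (primeOp hn) a b with hz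
  have hval : ∀ k, (z (k + 2)).val =
      primeVal n (z k).val (primeVal n (z k).val (z (k + 1)).val) := by
    intro k; rw [hz]; rfl
  have h' : primeVal n b.val a.val = 0 := congrArg Fin.val h
  -- a stabilization index: some m ≤ n - 2 with z (m+1) = z m
  have main : ∃ m, m ≤ n - 2 ∧ z (m + 1) = z m := by
    by_cases hB : a.val = b.val + 1 ∧ 2 ≤ b.val ∧ a.val < n
    · -- decreasing case
      have decr : ∀ j, j + 2 ≤ a.val →
          (z j).val = a.val - j ∧ (z (j + 1)).val = a.val - (j + 1) := by
        intro j
        induction j with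
        | zero =>
          intro _
          constructor
          · simp [hz, zseq]
          · simp only [hz]; show b.val = a.val - 1; omega
        | succ j ih =>
          intro hj
          have ih' := ih (by omega)
          refine ⟨ih'.2, ?_⟩
          have e := hval j
          rw [ih'.1, show (z (j+1)).val = a.val - j - 1 by omega] at e
          have := stepB n (a.val - j) hn (by omega) (by omega)
          rw [show a.val - j - 1 = a.val - j - 1 from rfl] at e
          have e2 : (z (j + 2)).val = a.val - j - 2 := by
            rw [e]; rw [show a.val - j - 1 = (a.val - j) - 1 from rfl]; rw [this]
          have e3 : (z (j + 1 + 1)).val = (z (j + 2)).val := rfl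
          omega
      have hd := decr (a.val - 2) (by omega)
      have h2 : (z (a.val - 2)).val = 2 := by omega
      have h1 : (z (a.val - 1)).val = 1 := by
        have := hd.2; rw [show a.val - 2 + 1 = a.val - 1 by omega] at this; omega
      refine ⟨a.val - 1, by omega, ?_⟩
      apply Fin.ext
      have e := hval (a.val - 2)
      rw [show a.val - 2 + 2 = a.val - 1 + 1 by omega,
        show a.val - 2 + 1 = a.val - 1 by omega] at e
      rw [e, h2, h1, twoone n hn]
    · refine ⟨1, by omega, ?_⟩
      apply Fin.ext
      have e := hval 0
      rw [show (0:ℕ) + 2 = 1 + 1 from rfl, show (0:ℕ) + 1 = 1 from rfl] at e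
      have hz0 : (z 0).val = a.val := rfl
      have hz1 : (z 1).val = b.val := rfl
      rw [e, hz0, hz1]
      exact keyA n a.val b.val hn (by omega) (by omega) h' hB
  obtain ⟨m, hm, hstab⟩ := main
  have hc := zseq_const (primeOp hn) a b (primeOp_fix hn) m hstab
  have hall : ∀ k, m ≤ k → z k = z m := by
    intro k hk
    obtain ⟨t, rfl⟩ := Nat.exists_eq_add_of_le hk
    exact hc t
  have h2 : z (n - 2) = z m := hall _ hm
  have h1 : z (n - 1) = z m := hall _ (by omega)
  exact ⟨h2.trans h1.symm, fun k hk => (hall k (by omega)).trans h2.symm⟩
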